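/- Let f : Σ_j I_j → I be a piecewise C^1 expanding map with finitely many branches I_1, …, I_m, where each I_j is a nonempty open subinterval of the compact interval I, |f'| ≥ σ > 2 on each I_j, and I ∖ (∪_j I_j) is finite. Then: (a) for each sufficiently small δ > 0 there exists n = n(δ) such that for every nonempty open interval J ⊂ ∪_j I_j with |J| ≥ δ, there exist 0 ≤ k ≤ n, a subinterval Ĵ of J and 1 ≤ j ≤ m such that f^k restricted to Ĵ is a diffeomorphism onto I_j; (b) f admits finitely many periodic orbits 𝒪(p_1), …, 𝒪(p_k) contained in ∪_j I_j with the property that every nonempty open interval J ⊂ ∪_j I_j admits an open subinterval Ĵ, a periodic point p_j and an iterate n such that f^n restricted to Ĵ is a diffeomorphism onto a neighborhood of p_j. -/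

import Mathlib

open Set

namespace PWExpAux

lemma expand_strictMonoOn {g : ℝ → ℝ} {c d K : ℝ} (hK : 0 < K)
    (hexp : ∀ x ∈ Ioo c d, ∀ y ∈ Ioo c d, x < y → K * (y - x) ≤ g y - g x) :
    StrictMonoOn g (Ioo c d) := by
  intro x hx y hy hxy
  nlinarith [hexp x hx y hy hxy]

lemma img_mono {g : ℝ → ℝ} {c d K A B : ℝ} (hcd : c < d) (hK : 0 < K)
    (hcont : ContinuousOn g (Ioo c d)) (hmaps : MapsTo g (Ioo c d) (Icc A B))
    (hexp : ∀ x ∈ Ioo c d, ∀ y ∈ Ioo c d, x < y → K * (y - x) ≤ g y - g x) :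
    ∃ u v, A ≤ u ∧ v ≤ B ∧ g '' Ioo c d = Ioo u v ∧ K * (d - c) ≤ v - u := by
  have hmono := expand_strictMonoOn hK hexp
  set Simg := g '' Ioo c d with hSimg
  have hmid : (c + d) / 2 ∈ Ioo c d := ⟨by linarith, by linarith⟩
  have hne : Simg.Nonempty := ⟨g ((c + d) / 2), mem_image_of_mem _ hmid⟩
  have hbdd : Simg ⊆ Icc A B := hmaps.image_subset
  have hba : BddAbove Simg := ⟨B, fun z hz => (hbdd hz).2⟩
  have hbb : BddBelow Simg := ⟨A, fun z hz => (hbdd hz).1⟩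
  set u := sInf Simg with hu
  set v := sSup Simg with hv
  have hAu : A ≤ u := le_csInf hne fun z hz => (hbdd hz).1
  have hvB : v ≤ B := csSup_le hne fun z hz => (hbdd hz).2
  have hunot : u ∉ Simg := by
    rintro ⟨x, hx, hgx⟩
    have hy : (c + x) / 2 ∈ Ioo c d := ⟨by linarith [hx.1], by linarith [hx.1, hx.2]⟩
    have h1 : g ((c + x) / 2) < g x := hmono hy hx (by linarith [hx.1])
    have h2 : u ≤ g ((c + x) / 2) := csInf_le hbb (mem_image_of_mem _ hy)
    rw [hgx] at h1; linarith
  have hvnot : v ∉ Simg := by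
    rintro ⟨x, hx, hgx⟩
    have hy : (x + d) / 2 ∈ Ioo c d := ⟨by linarith [hx.1, hx.2], by linarith [hx.2]⟩
    have h1 : g x < g ((x + d) / 2) := hmono hx hy (by linarith [hx.2])
    have h2 : g ((x + d) / 2) ≤ v := le_csSup hba (mem_image_of_mem _ hy)
    rw [hgx] at h1; linarith
  have himg : Simg = Ioo u v := by
    ext z
    constructor
    · intro hz
      refine ⟨lt_of_le_of_ne (csInf_le hbb hz) ?_, lt_of_le_of_ne (le_csSup hba hz) ?_⟩
      · intro h; exact hunot (h ▸ hz)
      · intro h; exact hvnot (h ▸ hz)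
    · intro hz
      obtain ⟨z₁, hz₁S, hz₁lt⟩ := exists_lt_of_csInf_lt hne hz.1
      obtain ⟨z₂, hz₂S, hz₂gt⟩ := exists_lt_of_lt_csSup hne hz.2
      obtain ⟨x₁, hx₁, rfl⟩ := hz₁S
      obtain ⟨x₂, hx₂, rfl⟩ := hz₂S
      have hx12 : x₁ < x₂ := by
        by_contra h
        push_neg at h
        have := hmono.monotoneOn hx₂ hx₁ h
        linarith
      have hIcc : Icc x₁ x₂ ⊆ Ioo c d := fun w hw => ⟨lt_of_lt_of_le hx₁.1 hw.1, lt_of_le_of_lt hw.2 hx₂.2⟩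
      have hz' : z ∈ g '' Icc x₁ x₂ :=
        intermediate_value_Icc hx12.le (hcont.mono hIcc) ⟨hz₁lt.le, hz₂gt.le⟩
      exact let ⟨w, hw, hgw⟩ := hz'; ⟨w, hIcc hw, hgw⟩
  refine ⟨u, v, hAu, hvB, himg, ?_⟩
  by_contra hlt
  push_neg at hlt
  have hnum : 0 < K * (d - c) - (v - u) := by linarith
  set ε := min ((d - c) / 4) ((K * (d - c) - (v - u)) / (4 * K)) with hε
  have hε0 : 0 < ε := lt_min (by linarith) (by positivity)
  have hε1 : ε ≤ (d - c) / 4 := min_le_left _ _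
  have hε2 : K * ε ≤ (K * (d - c) - (v - u)) / 4 := by
    have h1 : K * ε ≤ K * ((K * (d - c) - (v - u)) / (4 * K)) :=
      mul_le_mul_of_nonneg_left (min_le_right _ _) hK.le
    have h2 : K * ((K * (d - c) - (v - u)) / (4 * K)) = (K * (d - c) - (v - u)) / 4 := by
      field_simp
    linarith [h1, h2.le]
  have hx : c + ε ∈ Ioo c d := ⟨by linarith, by linarith⟩
  have hy : d - ε ∈ Ioo c d := ⟨by linarith, by linarith⟩
  have hxy : c + ε < d - ε := by linarith
  have h1 := hexp _ hx _ hy hxy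
  have h2 : g (d - ε) ≤ v := le_csSup hba (mem_image_of_mem _ hy)
  have h3 : u ≤ g (c + ε) := csInf_le hbb (mem_image_of_mem _ hx)
  have h4 : K * (d - ε - (c + ε)) = K * (d - c) - 2 * (K * ε) := by ring
  linarith


lemma refl_mem {c d x : ℝ} (hx : x ∈ Ioo c d) : c + d - x ∈ Ioo c d :=
  ⟨by linarith [hx.2], by linarith [hx.1]⟩

lemma refl_image {c d : ℝ} : (fun x => c + d - x) '' Ioo c d = Ioo c d := by
  have := Set.image_const_sub_Ioo (c + d) c d
  simpa using this

lemma img_abs {g : ℝ → ℝ} {c d K A B : ℝ} (hcd : c < d) (hK : 0 < K)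
    (hcont : ContinuousOn g (Ioo c d)) (hmaps : MapsTo g (Ioo c d) (Icc A B))
    (hexp : ∀ x ∈ Ioo c d, ∀ y ∈ Ioo c d, x < y → K * (y - x) ≤ |g y - g x|) :
    ∃ u v, A ≤ u ∧ v ≤ B ∧ g '' Ioo c d = Ioo u v ∧ K * (d - c) ≤ v - u := by
  have hinj : InjOn g (Ioo c d) := by
    intro x hx y hy hgxy
    by_contra hne
    rcases lt_or_gt_of_ne hne with h | h
    · have := hexp x hx y hy h; rw [hgxy, sub_self, abs_zero] at this; nlinarith
    · have := hexp y hy x hx h; rw [hgxy, sub_self, abs_zero] at this; nlinarith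
  rcases hcont.strictMonoOn_of_injOn_Ioo hcd hinj with hmono | hanti
  · refine img_mono hcd hK hcont hmaps ?_
    intro x hx y hy hxy
    have h1 := hexp x hx y hy hxy
    have h2 : g x < g y := hmono hx hy hxy
    rwa [abs_of_pos (by linarith)] at h1
  · set r : ℝ → ℝ := fun x => c + d - x with hr
    have hrcont : ContinuousOn r (Ioo c d) := (continuous_const.sub continuous_id).continuousOn
    have hrm : MapsTo r (Ioo c d) (Ioo c d) := fun x hx => refl_mem hx
    have hcont' : ContinuousOn (g ∘ r) (Ioo c d) := hcont.comp hrcont hrm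
    have hmaps' : MapsTo (g ∘ r) (Ioo c d) (Icc A B) := fun x hx => hmaps (hrm hx)
    have hexp' : ∀ x ∈ Ioo c d, ∀ y ∈ Ioo c d, x < y → K * (y - x) ≤ (g ∘ r) y - (g ∘ r) x := by
      intro x hx y hy hxy
      have hX : c + d - y ∈ Ioo c d := refl_mem hy
      have hY : c + d - x ∈ Ioo c d := refl_mem hx
      have hXY : c + d - y < c + d - x := by linarith
      have h1 := hexp _ hX _ hY hXY
      have h2 : g (c + d - x) < g (c + d - y) := hanti hX hY hXY
      rw [abs_of_neg (by linarith)] at h1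
      simp only [Function.comp, hr]
      linarith
    obtain ⟨u, v, hAu, hvB, himg, hexpv⟩ := img_mono hcd hK hcont' hmaps' hexp'
    refine ⟨u, v, hAu, hvB, ?_, by linarith⟩
    rw [Set.image_comp] at himg
    rwa [refl_image] at himg

lemma sub_mono {g : ℝ → ℝ} {c d u v s t : ℝ} (hcd : c < d)
    (hmono : StrictMonoOn g (Ioo c d)) (himg : g '' Ioo c d = Ioo u v)
    (hus : u ≤ s) (hst : s < t) (htv : t ≤ v) :
    ∃ c' d', c ≤ c' ∧ c' < d' ∧ d' ≤ d ∧ g '' Ioo c' d' = Ioo s t := by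
  have huv : u < v := lt_of_le_of_lt hus (lt_of_lt_of_le hst htv)
  obtain ⟨c', hcc', hc'⟩ :
      ∃ c', c ≤ c' ∧ ((c' = c ∧ s = u) ∨ (c' ∈ Ioo c d ∧ g c' = s)) := by
    rcases eq_or_lt_of_le hus with h | h
    · exact ⟨c, le_rfl, Or.inl ⟨rfl, h.symm⟩⟩
    · have hs : s ∈ Ioo u v := ⟨h, lt_of_lt_of_le hst htv⟩
      rw [← himg] at hs
      obtain ⟨x, hx, hgx⟩ := hs
      exact ⟨x, hx.1.le, Or.inr ⟨hx, hgx⟩⟩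
  obtain ⟨d', hd'd, hd'⟩ :
      ∃ d', d' ≤ d ∧ ((d' = d ∧ t = v) ∨ (d' ∈ Ioo c d ∧ g d' = t)) := by
    rcases eq_or_lt_of_le htv with h | h
    · exact ⟨d, le_rfl, Or.inl ⟨rfl, h⟩⟩
    · have ht : t ∈ Ioo u v := ⟨lt_of_le_of_lt hus hst, h⟩
      rw [← himg] at ht
      obtain ⟨x, hx, hgx⟩ := ht
      exact ⟨x, hx.2.le, Or.inr ⟨hx, hgx⟩⟩
  have hcd' : c' < d' := by
    rcases hc' with ⟨rfl, _⟩ | ⟨hcm, hgc⟩ <;> rcases hd' with ⟨rfl, _⟩ | ⟨hdm, hgd⟩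
    · exact hcd
    · exact hdm.1
    · exact hcm.2
    · by_contra h
      push_neg at h
      have := hmono.monotoneOn hdm hcm h
      rw [hgc, hgd] at this; linarith
  have hsubI : Ioo c' d' ⊆ Ioo c d := fun w hw =>
    ⟨lt_of_le_of_lt hcc' hw.1, lt_of_lt_of_le hw.2 hd'd⟩
  refine ⟨c', d', hcc', hcd', hd'd, ?_⟩
  ext z
  constructor
  · rintro ⟨x, hx, rfl⟩
    have hxm : x ∈ Ioo c d := hsubI hx
    constructor
    · rcases hc' with ⟨hc, hs⟩ | ⟨hcm, hgc⟩
      · have : g x ∈ Ioo u v := himg ▸ mem_image_of_mem g hxm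
        rw [hs]; exact this.1
      · rw [← hgc]; exact hmono hcm hxm hx.1
    · rcases hd' with ⟨hd, ht⟩ | ⟨hdm, hgd⟩
      · have : g x ∈ Ioo u v := himg ▸ mem_image_of_mem g hxm
        rw [ht]; exact this.2
      · rw [← hgd]; exact hmono hxm hdm hx.2
  · intro hz
    have hz' : z ∈ Ioo u v := ⟨lt_of_le_of_lt hus hz.1, lt_of_lt_of_le hz.2 htv⟩
    rw [← himg] at hz'
    obtain ⟨x, hx, rfl⟩ := hz'
    refine ⟨x, ⟨?_, ?_⟩, rfl⟩
    · rcases hc' with ⟨hc, _⟩ | ⟨hcm, hgc⟩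
      · rw [hc]; exact hx.1
      · by_contra h
        push_neg at h
        have := hmono.monotoneOn hx hcm h
        rw [hgc] at this; linarith [hz.1]
    · rcases hd' with ⟨hd, _⟩ | ⟨hdm, hgd⟩
      · rw [hd]; exact hx.2
      · by_contra h
        push_neg at h
        have := hmono.monotoneOn hdm hx h
        rw [hgd] at this; linarith [hz.2]

lemma sub_any {g : ℝ → ℝ} {c d u v s t : ℝ} (hcd : c < d)
    (hcont : ContinuousOn g (Ioo c d)) (hinj : InjOn g (Ioo c d))
    (himg : g '' Ioo c d = Ioo u v)
    (hus : u ≤ s) (hst : s < t) (htv : t ≤ v) :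
    ∃ c' d', c ≤ c' ∧ c' < d' ∧ d' ≤ d ∧ g '' Ioo c' d' = Ioo s t := by
  rcases hcont.strictMonoOn_of_injOn_Ioo hcd hinj with hmono | hanti
  · exact sub_mono hcd hmono himg hus hst htv
  · set r : ℝ → ℝ := fun x => c + d - x with hr
    have hmono' : StrictMonoOn (g ∘ r) (Ioo c d) := by
      intro x hx y hy hxy
      exact hanti (refl_mem hy) (refl_mem hx) (by simp only [hr]; linarith)
    have himg' : (g ∘ r) '' Ioo c d = Ioo u v := by
      rw [Set.image_comp, refl_image]; exact himg
    obtain ⟨c'', d'', hcc, hcd'', hdd, him⟩ := sub_mono hcd hmono' himg' hus hst htv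
    refine ⟨c + d - d'', c + d - c'', by linarith, by linarith, by linarith, ?_⟩
    rw [Set.image_comp] at him
    have hri : r '' Ioo c'' d'' = Ioo (c + d - d'') (c + d - c'') :=
      Set.image_const_sub_Ioo (c + d) c'' d''
    rwa [hri] at him


structure ES where
  a : ℝ
  b : ℝ
  hab : a < b
  m : ℕ
  hm : 1 ≤ m
  p : Fin m → ℝ
  q : Fin m → ℝ
  hpq : ∀ j, p j < q j
  hsub : ∀ j, Ioo (p j) (q j) ⊆ Icc a b
  hdisj : ∀ j j', j ≠ j' → Disjoint (Ioo (p j) (q j)) (Ioo (p j') (q j'))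
  hfin : (Icc a b \ ⋃ j, Ioo (p j) (q j)).Finite
  f : ℝ → ℝ
  f' : ℝ → ℝ
  hmaps : ∀ j, MapsTo f (Ioo (p j) (q j)) (Icc a b)
  hderiv : ∀ j, ∀ x ∈ Ioo (p j) (q j), HasDerivAt f (f' x) x
  hderivcont : ∀ j, ContinuousOn f' (Ioo (p j) (q j))
  σ : ℝ
  hσ : 2 < σ
  hexp : ∀ j, ∀ x ∈ Ioo (p j) (q j), σ ≤ |f' x|

namespace ES

variable (E : ES)

def U : Set ℝ := ⋃ j, Ioo (E.p j) (E.q j)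

lemma hσ0 : 0 < E.σ := by linarith [E.hσ]

lemma U_subset : E.U ⊆ Icc E.a E.b := iUnion_subset E.hsub

lemma contf (j : Fin E.m) : ContinuousOn E.f (Ioo (E.p j) (E.q j)) :=
  fun x hx => ((E.hderiv j x hx).continuousAt).continuousWithinAt

/-- An interval inside the union of branches lies in a single branch. -/
lemma branch_of_subset {e₁ e₂ : ℝ} (h12 : e₁ < e₂) (hsb : Ioo e₁ e₂ ⊆ E.U) :
    ∃ j, Ioo e₁ e₂ ⊆ Ioo (E.p j) (E.q j) := by
  have hmid : (e₁ + e₂) / 2 ∈ Ioo e₁ e₂ := ⟨by linarith, by linarith⟩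
  have h1 := hsb hmid
  simp only [U, mem_iUnion] at h1
  obtain ⟨j, hj⟩ := h1
  refine ⟨j, fun y hy => ?_⟩
  by_contra hy'
  simp only [mem_Ioo, not_and_or, not_lt] at hy'
  rcases hy' with h | h
  · -- y ≤ p j, so p j ∈ Ioo e₁ e₂
    have hpj : E.p j ∈ Ioo e₁ e₂ := ⟨lt_of_lt_of_le hy.1 h, lt_trans hj.1 hmid.2⟩
    have h2 := hsb hpj
    simp only [U, mem_iUnion] at h2
    obtain ⟨j', hj'⟩ := h2
    have hjj' : j' ≠ j := by
      intro hEq; rw [hEq] at hj'; exact lt_irrefl _ hj'.1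
    set w := min ((e₁ + e₂) / 2) ((E.p j + E.q j') / 2) with hw
    have hwj : w ∈ Ioo (E.p j) (E.q j) :=
      ⟨lt_min hj.1 (by linarith [hj'.2]), lt_of_le_of_lt (min_le_left _ _) hj.2⟩
    have hwj' : w ∈ Ioo (E.p j') (E.q j') :=
      ⟨lt_trans hj'.1 hwj.1,
        lt_of_le_of_lt (min_le_right _ _) (by linarith [hj'.2])⟩
    exact (E.hdisj j' j hjj').ne_of_mem hwj' hwj rfl
  · -- q j ≤ y
    have hqj : E.q j ∈ Ioo e₁ e₂ := ⟨lt_trans hmid.1 hj.2, lt_of_le_of_lt h hy.2⟩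
    have h2 := hsb hqj
    simp only [U, mem_iUnion] at h2
    obtain ⟨j', hj'⟩ := h2
    have hjj' : j' ≠ j := by
      intro hEq; rw [hEq] at hj'; exact lt_irrefl _ hj'.2
    set w := max ((e₁ + e₂) / 2) ((E.q j + E.p j') / 2) with hw
    have hwj : w ∈ Ioo (E.p j) (E.q j) :=
      ⟨lt_of_lt_of_le hj.1 (le_max_left _ _), max_lt hj.2 (by linarith [hj'.1])⟩
    have hwj' : w ∈ Ioo (E.p j') (E.q j') :=
      ⟨lt_of_lt_of_le (by linarith [hj'.1] : E.p j' < (E.q j + E.p j') / 2) (le_max_right _ _),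
        lt_trans hwj.2 hj'.2⟩
    exact (E.hdisj j' j hjj').ne_of_mem hwj' hwj rfl


/-- The derivative has constant sign on each branch. -/
lemma sign (j : Fin E.m) :
    (∀ x ∈ Ioo (E.p j) (E.q j), E.σ ≤ E.f' x) ∨
    (∀ x ∈ Ioo (E.p j) (E.q j), E.f' x ≤ -E.σ) := by
  by_contra hcon
  push_neg at hcon
  obtain ⟨⟨x, hx, hx'⟩, ⟨y, hy, hy'⟩⟩ := hcon
  have hxneg : E.f' x ≤ -E.σ := by
    have := E.hexp j x hx
    rcases abs_cases (E.f' x) with ⟨h1, _⟩ | ⟨h1, _⟩ <;> linarith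
  have hypos : E.σ ≤ E.f' y := by
    have := E.hexp j y hy
    rcases abs_cases (E.f' y) with ⟨h1, _⟩ | ⟨h1, _⟩ <;> linarith
  have hI : uIcc x y ⊆ Ioo (E.p j) (E.q j) :=
    (ordConnected_Ioo).uIcc_subset hx hy
  have hcont : ContinuousOn E.f' (uIcc x y) := (E.hderivcont j).mono hI
  have h0 : (0:ℝ) ∈ uIcc (E.f' x) (E.f' y) := by
    apply Icc_subset_uIcc
    constructor <;> [linarith [E.hσ0]; linarith [E.hσ0]]
  obtain ⟨z, hz, hz0⟩ := intermediate_value_uIcc hcont h0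
  have := E.hexp j z (hI hz)
  rw [hz0, abs_zero] at this
  linarith [E.hσ0]

/-- Expansion in absolute value on each branch. -/
lemma absexp (j : Fin E.m) :
    ∀ x ∈ Ioo (E.p j) (E.q j), ∀ y ∈ Ioo (E.p j) (E.q j), x < y →
      E.σ * (y - x) ≤ |E.f y - E.f x| := by
  intro x hx y hy hxy
  have hIcc : Icc x y ⊆ Ioo (E.p j) (E.q j) :=
    (ordConnected_Ioo).out hx hy
  have hIoo : Ioo x y ⊆ Ioo (E.p j) (E.q j) := Ioo_subset_Icc_self.trans hIcc
  have hcont : ContinuousOn E.f (Icc x y) := (E.contf j).mono hIcc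
  obtain ⟨z, hz, hslope⟩ := exists_hasDerivAt_eq_slope E.f E.f' hxy hcont
    (fun w hw => E.hderiv j w (hIoo hw))
  have hyx : y - x ≠ 0 := ne_of_gt (by linarith)
  have h1 : E.f y - E.f x = E.f' z * (y - x) := by
    rw [hslope, div_mul_cancel₀ _ hyx]
  rw [h1, abs_mul, abs_of_pos (by linarith : (0:ℝ) < y - x)]
  exact mul_le_mul_of_nonneg_right (E.hexp j z (hIoo hz)) (by linarith)

lemma injf (j : Fin E.m) : InjOn E.f (Ioo (E.p j) (E.q j)) := by
  intro x hx y hy hxy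
  by_contra hne
  rcases lt_or_gt_of_ne hne with h | h
  · have := E.absexp j x hx y hy h
    rw [hxy, sub_self, abs_zero] at this
    nlinarith [E.hσ0]
  · have := E.absexp j y hy x hx h
    rw [hxy, sub_self, abs_zero] at this
    nlinarith [E.hσ0]

/-- One-step image structure on a subinterval of a branch. -/
lemma onestep {j : Fin E.m} {e₁ e₂ : ℝ} (h12 : e₁ < e₂)
    (hsb : Ioo e₁ e₂ ⊆ Ioo (E.p j) (E.q j)) :
    ∃ u v, E.a ≤ u ∧ v ≤ E.b ∧ E.f '' Ioo e₁ e₂ = Ioo u v ∧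
      E.σ * (e₂ - e₁) ≤ v - u := by
  exact img_abs h12 E.hσ0 ((E.contf j).mono hsb) ((E.hmaps j).mono_left hsb)
    (fun x hx y hy hxy => E.absexp j x (hsb hx) y (hsb hy) hxy)

/-- Pull back a subinterval of the one-step image. -/
lemma pull {j : Fin E.m} {e₁ e₂ u v s t : ℝ} (h12 : e₁ < e₂)
    (hsb : Ioo e₁ e₂ ⊆ Ioo (E.p j) (E.q j))
    (himg : E.f '' Ioo e₁ e₂ = Ioo u v)
    (hus : u ≤ s) (hst : s < t) (htv : t ≤ v) :
    ∃ c d, e₁ ≤ c ∧ c < d ∧ d ≤ e₂ ∧ E.f '' Ioo c d = Ioo s t :=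
  sub_any h12 ((E.contf j).mono hsb) ((E.injf j).mono hsb) himg hus hst htv


/-- Either a full branch is inside `(u,v)`, or a half-size subinterval avoids the bad set. -/
lemma cover {u v : ℝ} (huv : u < v) (hu : E.a ≤ u) (hv : v ≤ E.b) :
    (∃ j, Ioo (E.p j) (E.q j) ⊆ Ioo u v) ∨
    (∃ s t, u ≤ s ∧ s < t ∧ t ≤ v ∧ (v - u) / 2 ≤ t - s ∧ Ioo s t ⊆ E.U) := by
  set B := (Icc E.a E.b \ E.U) ∩ Ioo u v with hB
  have hBfin : B.Finite := E.hfin.subset (inter_subset_left)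
  have hIccmem : ∀ z ∈ Ioo u v, z ∈ Icc E.a E.b := fun z hz =>
    ⟨le_trans hu hz.1.le, le_trans hz.2.le hv⟩
  by_cases hBne : B.Nonempty
  · obtain ⟨x₀, hx₀⟩ := hBne
    by_cases hB2 : ∃ y ∈ B, y ≠ x₀
    · -- two bad points: a full branch is contained
      left
      obtain ⟨y, hy, hyne⟩ := hB2
      obtain ⟨x₁, x₂, hx₁B, hx₂B, hx₁lt⟩ : ∃ x₁ x₂, x₁ ∈ B ∧ x₂ ∈ B ∧ x₁ < x₂ := by
        rcases lt_or_gt_of_ne hyne with h | h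
        · exact ⟨y, x₀, hy, hx₀, h⟩
        · exact ⟨x₀, y, hx₀, hy, h⟩
      set B' := B ∩ Ioi x₁ with hB'
      have hB'fin : B'.Finite := hBfin.subset (inter_subset_left)
      have hB'ne : B'.Nonempty := ⟨x₂, hx₂B, hx₁lt⟩
      obtain ⟨mn, hmnB', hmnmin⟩ := Set.exists_min_image B' id hB'fin hB'ne
      have hx₁mn : x₁ < mn := hmnB'.2
      have hnoB : ∀ z ∈ Ioo x₁ mn, z ∉ B := by
        intro z hz hzB
        have : mn ≤ z := hmnmin z ⟨hzB, hz.1⟩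
        linarith [hz.2]
      have hsubU : Ioo x₁ mn ⊆ E.U := by
        intro z hz
        have hz1 : z ∈ Ioo u v :=
          ⟨lt_trans hx₁B.2.1 hz.1, lt_trans hz.2 hmnB'.1.2.2⟩
        by_contra hzU
        exact hnoB z hz ⟨⟨hIccmem z hz1, hzU⟩, hz1⟩
      obtain ⟨j, hj⟩ := E.branch_of_subset hx₁mn hsubU
      have hb := (Ioo_subset_Ioo_iff hx₁mn).1 hj
      have hx₁p : x₁ = E.p j := by
        have h1 : x₁ ∉ Ioo (E.p j) (E.q j) := by
          intro hmem
          exact hx₁B.1.2 (mem_iUnion.2 ⟨j, hmem⟩)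
        rcases lt_or_ge (E.p j) x₁ with h | h
        · exact absurd ⟨h, lt_of_lt_of_le hx₁mn hb.2⟩ h1
        · linarith [hb.1]
      have hmnq : mn = E.q j := by
        have h1 : mn ∉ Ioo (E.p j) (E.q j) := by
          intro hmem
          exact hmnB'.1.1.2 (mem_iUnion.2 ⟨j, hmem⟩)
        rcases lt_or_ge mn (E.q j) with h | h
        · exact absurd ⟨lt_of_le_of_lt hb.1 hx₁mn, h⟩ h1
        · linarith [hb.2]
      refine ⟨j, ?_⟩
      rw [← hx₁p, ← hmnq]
      exact fun z hz => ⟨lt_trans hx₁B.2.1 hz.1, lt_trans hz.2 hmnB'.1.2.2⟩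
    · -- single bad point x₀
      right
      push_neg at hB2
      have hx₀uv : x₀ ∈ Ioo u v := hx₀.2
      have hside : ∀ s t, u ≤ s → s < t → t ≤ v → (∀ z ∈ Ioo s t, z ≠ x₀) →
          Ioo s t ⊆ E.U := by
        intro s t hs hst ht hne z hz
        have hz1 : z ∈ Ioo u v := ⟨lt_of_le_of_lt hs hz.1, lt_of_lt_of_le hz.2 ht⟩
        by_contra hzU
        exact hne z hz (hB2 z ⟨⟨hIccmem z hz1, hzU⟩, hz1⟩)
      rcases le_or_gt ((v - u) / 2) (x₀ - u) with h | h
      · exact ⟨u, x₀, le_rfl, hx₀uv.1, hx₀uv.2.le, by linarith, hside u x₀ le_rfl hx₀uv.1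
          hx₀uv.2.le (fun z hz => ne_of_lt hz.2)⟩
      · exact ⟨x₀, v, hx₀uv.1.le, hx₀uv.2, le_rfl, by linarith, hside x₀ v hx₀uv.1.le
          hx₀uv.2 le_rfl (fun z hz => ne_of_gt hz.1)⟩
  · right
    refine ⟨u, v, le_rfl, huv, le_rfl, by linarith, ?_⟩
    intro z hz
    by_contra hzU
    exact hBne ⟨z, ⟨hIccmem z hz, hzU⟩, hz⟩


/-- The key property: `f^[k]` maps `(c,d)` diffeomorphically onto branch `j`,
with all intermediate iterates inside the union of branches. -/
def Good (k : ℕ) (c d : ℝ) (j : Fin E.m) : Prop :=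
  E.f^[k] '' Ioo c d = Ioo (E.p j) (E.q j) ∧
  InjOn (E.f^[k]) (Ioo c d) ∧
  (∀ x ∈ Ioo c d, ∃ dv, dv ≠ 0 ∧ HasDerivAt (E.f^[k]) dv x) ∧
  (∀ t, t < k → ∀ x ∈ Ioo c d, E.f^[t] x ∈ E.U)

lemma fstep {j₀ : Fin E.m} {c d : ℝ} (hsb : Ioo c d ⊆ Ioo (E.p j₀) (E.q j₀)) :
    InjOn (E.f^[1]) (Ioo c d) ∧
    (∀ x ∈ Ioo c d, ∃ dv, dv ≠ 0 ∧ HasDerivAt (E.f^[1]) dv x) ∧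
    (∀ t, t < 1 → ∀ x ∈ Ioo c d, E.f^[t] x ∈ E.U) := by
  refine ⟨?_, ?_, ?_⟩
  · rw [Function.iterate_one]
    exact (E.injf j₀).mono hsb
  · intro x hx
    refine ⟨E.f' x, ?_, by rw [Function.iterate_one]; exact E.hderiv j₀ x (hsb hx)⟩
    have h := E.hexp j₀ x (hsb hx)
    intro h0
    rw [h0, abs_zero] at h
    linarith [E.hσ0]
  · intro t ht x hx
    have ht0 : t = 0 := by omega
    subst ht0
    simp only [Function.iterate_zero_apply]
    exact mem_iUnion.2 ⟨j₀, hsb hx⟩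

lemma comp' {k₁ k₂ : ℕ} {c₁ d₁ c₂ d₂ : ℝ} {j₂ : Fin E.m}
    (him : E.f^[k₁] '' Ioo c₁ d₁ = Ioo c₂ d₂)
    (hinj : InjOn (E.f^[k₁]) (Ioo c₁ d₁))
    (hdv : ∀ x ∈ Ioo c₁ d₁, ∃ dv, dv ≠ 0 ∧ HasDerivAt (E.f^[k₁]) dv x)
    (horb : ∀ t, t < k₁ → ∀ x ∈ Ioo c₁ d₁, E.f^[t] x ∈ E.U)
    (hG₂ : E.Good k₂ c₂ d₂ j₂) :
    E.Good (k₁ + k₂) c₁ d₁ j₂ := by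
  have hco : E.f^[k₁ + k₂] = E.f^[k₂] ∘ E.f^[k₁] := by
    rw [add_comm, Function.iterate_add]
  obtain ⟨him₂, hinj₂, hdv₂, horb₂⟩ := hG₂
  have hmt : MapsTo (E.f^[k₁]) (Ioo c₁ d₁) (Ioo c₂ d₂) := him ▸ mapsTo_image _ _
  refine ⟨?_, ?_, ?_, ?_⟩
  · rw [hco, Set.image_comp, him, him₂]
  · rw [hco]
    exact hinj₂.comp hinj hmt
  · intro x hx
    obtain ⟨dv₁, hdv₁0, hD₁⟩ := hdv x hx
    obtain ⟨dv₂, hdv₂0, hD₂⟩ := hdv₂ _ (hmt hx)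
    refine ⟨dv₂ * dv₁, mul_ne_zero hdv₂0 hdv₁0, ?_⟩
    rw [hco]
    exact hD₂.comp x hD₁
  · intro t ht x hx
    rcases lt_or_ge t k₁ with h | h
    · exact horb t h x hx
    · have ht2 : t - k₁ < k₂ := by omega
      have heq : E.f^[t] x = E.f^[t - k₁] (E.f^[k₁] x) := by
        conv_lhs => rw [show t = (t - k₁) + k₁ by omega]
        rw [Function.iterate_add_apply]
      rw [heq]
      exact horb₂ _ ht2 _ (hmt hx)

lemma contfk {k : ℕ} {c d : ℝ}
    (hdv : ∀ x ∈ Ioo c d, ∃ dv, dv ≠ 0 ∧ HasDerivAt (E.f^[k]) dv x) :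
    ContinuousOn (E.f^[k]) (Ioo c d) := by
  intro x hx
  obtain ⟨dv, _, hD⟩ := hdv x hx
  exact hD.continuousAt.continuousWithinAt

lemma compGood {k₁ k₂ : ℕ} {c₁ d₁ c₂ d₂ : ℝ} {j₁ j₂ : Fin E.m}
    (h1 : c₁ < d₁) (h2 : c₂ < d₂)
    (hG₁ : E.Good k₁ c₁ d₁ j₁) (hG₂ : E.Good k₂ c₂ d₂ j₂)
    (hsb : Ioo c₂ d₂ ⊆ Ioo (E.p j₁) (E.q j₁)) :
    ∃ c d, c₁ ≤ c ∧ c < d ∧ d ≤ d₁ ∧ E.Good (k₁ + k₂) c d j₂ := by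
  obtain ⟨him₁, hinj₁, hdv₁, horb₁⟩ := hG₁
  have hb := (Ioo_subset_Ioo_iff h2).1 hsb
  obtain ⟨c, d, hc, hcd, hd, him⟩ :=
    sub_any h1 (E.contfk hdv₁) hinj₁ him₁ hb.1 h2 hb.2
  have hss : Ioo c d ⊆ Ioo c₁ d₁ := fun x hx =>
    ⟨lt_of_le_of_lt hc hx.1, lt_of_lt_of_le hx.2 hd⟩
  refine ⟨c, d, hc, hcd, hd, E.comp' him (hinj₁.mono hss)
    (fun x hx => hdv₁ x (hss hx)) (fun t ht x hx => horb₁ t ht x (hss hx)) hG₂⟩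

lemma Ioo_sub_Icc {A B e₁ e₂ : ℝ} (h12 : e₁ < e₂) (h : Ioo e₁ e₂ ⊆ Icc A B) :
    A ≤ e₁ ∧ e₂ ≤ B := by
  constructor
  · by_contra hA
    push_neg at hA
    have hz : (e₁ + min A e₂) / 2 ∈ Ioo e₁ e₂ := by
      constructor
      · have := lt_min hA h12; linarith [min_le_right A e₂, this]
      · linarith [min_le_right A e₂, lt_min hA h12]
    have := (h hz).1
    have h2 := lt_min hA h12
    have h3 := min_le_left A e₂
    linarith
  · by_contra hB
    push_neg at hB
    have hz : (max B e₁ + e₂) / 2 ∈ Ioo e₁ e₂ := by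
      constructor
      · linarith [le_max_right B e₁, max_lt hB h12]
      · linarith [le_max_left B e₁, max_lt hB h12]
    have := (h hz).2
    have h2 := max_lt hB h12
    have h3 := le_max_left B e₁
    linarith

/-- Main induction: a long enough interval is mapped onto a full branch
within a controlled number of iterates. -/
lemma main : ∀ n : ℕ, ∀ e₁ e₂ : ℝ, e₁ < e₂ → Ioo e₁ e₂ ⊆ E.U →
    E.b - E.a < (e₂ - e₁) * (E.σ / 2) ^ n →
    ∃ k, k ≤ n ∧ ∃ c d, e₁ ≤ c ∧ c < d ∧ d ≤ e₂ ∧ ∃ j, E.Good k c d j := by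
  intro n
  induction n with
  | zero =>
    intro e₁ e₂ h12 hsb hlen
    exfalso
    have h := Ioo_sub_Icc h12 (hsb.trans E.U_subset)
    rw [pow_zero, mul_one] at hlen
    linarith [h.1, h.2]
  | succ n ih =>
    intro e₁ e₂ h12 hsb hlen
    obtain ⟨j₀, hj₀⟩ := E.branch_of_subset h12 hsb
    obtain ⟨u, v, hau, hvb, himg, hexpuv⟩ := E.onestep h12 hj₀
    have huv : u < v := by nlinarith [E.hσ0]
    rcases E.cover huv hau hvb with ⟨j₁, hbr⟩ | ⟨s, t, hus, hst, htv, hlen2, hstU⟩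
    · have hb := (Ioo_subset_Ioo_iff (E.hpq j₁)).1 hbr
      obtain ⟨c, d, hc, hcd, hd, him⟩ := E.pull h12 hj₀ himg hb.1 (E.hpq j₁) hb.2
      have hss : Ioo c d ⊆ Ioo (E.p j₀) (E.q j₀) := fun x hx =>
        hj₀ ⟨lt_of_le_of_lt hc hx.1, lt_of_lt_of_le hx.2 hd⟩
      obtain ⟨hi1, hi2, hi3⟩ := E.fstep hss
      exact ⟨1, by omega, c, d, hc, hcd, hd, j₁,
        by rw [Function.iterate_one]; exact him, hi1, hi2, hi3⟩
    · have hσ2 : (0:ℝ) < E.σ / 2 := by linarith [E.hσ0]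
      have hstep : E.b - E.a < (t - s) * (E.σ / 2) ^ n := by
        have h2 : (0:ℝ) < (E.σ / 2) ^ n := pow_pos hσ2 n
        have h1 : (e₂ - e₁) * (E.σ / 2) ≤ t - s := by nlinarith
        calc E.b - E.a < (e₂ - e₁) * (E.σ / 2) ^ (n + 1) := hlen
          _ = ((e₂ - e₁) * (E.σ / 2)) * (E.σ / 2) ^ n := by ring
          _ ≤ (t - s) * (E.σ / 2) ^ n := by nlinarith
      obtain ⟨k, hk, c₂, d₂, hc₂, hcd₂, hd₂, j, hG⟩ := ih s t hst hstU hstep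
      obtain ⟨c, d, hc, hcd, hd, him⟩ :=
        E.pull h12 hj₀ himg (le_trans hus hc₂) hcd₂ (le_trans hd₂ htv)
      have hss : Ioo c d ⊆ Ioo (E.p j₀) (E.q j₀) := fun x hx =>
        hj₀ ⟨lt_of_le_of_lt hc hx.1, lt_of_lt_of_le hx.2 hd⟩
      obtain ⟨hi1, hi2, hi3⟩ := E.fstep hss
      have hG1 : E.Good (1 + k) c d j :=
        E.comp' (by rw [Function.iterate_one]; exact him) hi1 hi2 hi3 hG
      exact ⟨1 + k, by omega, c, d, hc, hcd, hd, j, hG1⟩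


/-- For every branch there is a compactly contained subinterval mapped by some
iterate diffeomorphically onto a full branch. -/
lemma branchdata : ∀ j : Fin E.m, ∃ (kk : ℕ) (cc dd : ℝ) (jj : Fin E.m),
    1 ≤ kk ∧ E.p j < cc ∧ cc < dd ∧ dd < E.q j ∧ E.Good kk cc dd jj := by
  intro j
  have hpq := E.hpq j
  set L := (2 * E.p j + E.q j) / 3 with hL
  set R := (E.p j + 2 * E.q j) / 3 with hR
  have hLR : L < R := by rw [hL, hR]; linarith
  have hpL : E.p j < L := by rw [hL]; linarith
  have hRq : R < E.q j := by rw [hR]; linarith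
  have hsubLR : Ioo L R ⊆ Ioo (E.p j) (E.q j) := Ioo_subset_Ioo hpL.le hRq.le
  have hsubU : Ioo L R ⊆ E.U := fun x hx => mem_iUnion.2 ⟨j, hsubLR hx⟩
  have hσ2 : (1:ℝ) < E.σ / 2 := by linarith [E.hσ]
  obtain ⟨n, hn⟩ := pow_unbounded_of_one_lt ((E.b - E.a) / (R - L)) hσ2
  have hRL : (0:ℝ) < R - L := by linarith
  have hlen : E.b - E.a < (R - L) * (E.σ / 2) ^ n := by
    rw [div_lt_iff₀ hRL] at hn
    linarith [hn]
  obtain ⟨kk, hkk, cc, dd, hcc, hccdd, hdd, jj, hG⟩ := E.main n L R hLR hsubU hlen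
  have hccp : E.p j < cc := lt_of_lt_of_le hpL hcc
  have hddq : dd < E.q j := lt_of_le_of_lt hdd hRq
  refine ⟨kk, cc, dd, jj, ?_, hccp, hccdd, hddq, hG⟩
  rcases Nat.eq_zero_or_pos kk with h0 | h1
  · exfalso
    subst h0
    have himg := hG.1
    simp only [Function.iterate_zero, Set.image_id] at himg
    by_cases hjj : jj = j
    · subst hjj
      have hsup : Ioo (E.p jj) (E.q jj) ⊆ Ioo cc dd := himg ▸ subset_rfl
      have := ((Ioo_subset_Ioo_iff (E.hpq jj)).1 hsup).1
      linarith
    · have hmid : (cc + dd) / 2 ∈ Ioo cc dd := ⟨by linarith, by linarith⟩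
      have hmem₁ : (cc + dd) / 2 ∈ Ioo (E.p jj) (E.q jj) := himg ▸ hmid
      have hmem₂ : (cc + dd) / 2 ∈ Ioo (E.p j) (E.q j) :=
        ⟨by linarith, by linarith⟩
      exact (E.hdisj jj j hjj).ne_of_mem hmem₁ hmem₂ rfl
  · exact h1

/-- Iterating the branch data along the itinerary map `τ`. -/
lemma chain {k : Fin E.m → ℕ} {c d : Fin E.m → ℝ} {τ : Fin E.m → Fin E.m}
    (hbd : ∀ j, 1 ≤ k j ∧ E.p j < c j ∧ c j < d j ∧ d j < E.q j ∧
      E.Good (k j) (c j) (d j) (τ j)) :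
    ∀ i : ℕ, ∀ (k₀ : ℕ) (c₀ d₀ : ℝ) (j : Fin E.m), c₀ < d₀ → E.Good k₀ c₀ d₀ j →
    ∃ K c' d', k₀ ≤ K ∧ c₀ ≤ c' ∧ c' < d' ∧ d' ≤ d₀ ∧ E.Good K c' d' (τ^[i] j) := by
  intro i
  induction i with
  | zero =>
    intro k₀ c₀ d₀ j h hG
    exact ⟨k₀, c₀, d₀, le_rfl, le_rfl, h, le_rfl, hG⟩
  | succ i ih =>
    intro k₀ c₀ d₀ j h hG
    obtain ⟨K, c', d', hK, hc', hcd', hd', hG'⟩ := ih k₀ c₀ d₀ j h hG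
    obtain ⟨hk1, hpc, hcd, hdq, hGb⟩ := hbd (τ^[i] j)
    have hsb : Ioo (c (τ^[i] j)) (d (τ^[i] j)) ⊆ Ioo (E.p (τ^[i] j)) (E.q (τ^[i] j)) :=
      Ioo_subset_Ioo hpc.le hdq.le
    obtain ⟨c'', d'', hc'', hcd'', hd'', hG''⟩ := E.compGood hcd' hcd hG' hGb hsb
    refine ⟨K + k (τ^[i] j), c'', d'', by omega, le_trans hc' hc'', hcd'',
      le_trans hd'' hd', ?_⟩
    rw [Function.iterate_succ_apply']
    exact hG''

/-- Each cycle of the itinerary map carries a periodic point of `f` whose full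
orbit stays inside the union of the branches. -/
lemma cyclept {k : Fin E.m → ℕ} {c d : Fin E.m → ℝ} {τ : Fin E.m → Fin E.m}
    (hbd : ∀ j, 1 ≤ k j ∧ E.p j < c j ∧ c j < d j ∧ d j < E.q j ∧
      E.Good (k j) (c j) (d j) (τ j))
    {j : Fin E.m} {s : ℕ} (hs : 1 ≤ s) (hcyc : τ^[s] j = j) :
    ∃ x, x ∈ Ioo (E.p j) (E.q j) ∧ (∃ T, 1 ≤ T ∧ E.f^[T] x = x) ∧
      ∀ t, E.f^[t] x ∈ E.U := by
  obtain ⟨hk1, hpc, hcd, hdq, hGb⟩ := hbd j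
  obtain ⟨K, c', d', hK, hc', hcd', hd', hG⟩ :=
    E.chain hbd (s - 1) (k j) (c j) (d j) (τ j) hcd hGb
  have hend : τ^[s - 1] (τ j) = j := by
    rw [← Function.iterate_succ_apply, Nat.succ_eq_add_one, show s - 1 + 1 = s by omega]
    exact hcyc
  rw [hend] at hG
  obtain ⟨him, hinj, hdv, horb⟩ := hG
  have hpc' : E.p j < c' := lt_of_lt_of_le hpc hc'
  have hd'q : d' < E.q j := lt_of_le_of_lt hd' hdq
  have hz₁ : (E.p j + c') / 2 ∈ Ioo (E.p j) (E.q j) :=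
    ⟨by linarith, by linarith⟩
  rw [← him] at hz₁
  obtain ⟨x₁, hx₁, hgx₁⟩ := hz₁
  have hz₂ : (d' + E.q j) / 2 ∈ Ioo (E.p j) (E.q j) :=
    ⟨by linarith, by linarith⟩
  rw [← him] at hz₂
  obtain ⟨x₂, hx₂, hgx₂⟩ := hz₂
  have hgcont : ContinuousOn (E.f^[K]) (Ioo c' d') := E.contfk hdv
  have hx₁lt : E.f^[K] x₁ - x₁ < 0 := by rw [hgx₁]; linarith [hx₁.1]
  have hx₂gt : 0 < E.f^[K] x₂ - x₂ := by rw [hgx₂]; linarith [hx₂.2]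
  have hUsub : uIcc x₁ x₂ ⊆ Ioo c' d' := (ordConnected_Ioo).uIcc_subset hx₁ hx₂
  have hhcont : ContinuousOn (fun x => E.f^[K] x - x) (uIcc x₁ x₂) :=
    (hgcont.mono hUsub).sub continuousOn_id
  have h0 : (0:ℝ) ∈ uIcc (E.f^[K] x₁ - x₁) (E.f^[K] x₂ - x₂) :=
    Icc_subset_uIcc ⟨hx₁lt.le, hx₂gt.le⟩
  obtain ⟨xs, hxsu, hxs0⟩ := intermediate_value_uIcc hhcont h0
  have hxmem : xs ∈ Ioo c' d' := hUsub hxsu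
  have hfix : E.f^[K] xs = xs := by
    have : E.f^[K] xs - xs = 0 := hxs0
    linarith
  have hK0 : 0 < K := lt_of_lt_of_le hk1 hK
  refine ⟨xs, ⟨lt_trans hpc' hxmem.1, lt_trans hxmem.2 hd'q⟩, ⟨K, hK0, hfix⟩, ?_⟩
  have hper : ∀ i, E.f^[K * i] xs = xs := by
    intro i
    induction i with
    | zero => simp
    | succ i ih =>
      rw [Nat.mul_succ, Function.iterate_add_apply, hfix, ih]
  intro t
  have hmod : E.f^[t] xs = E.f^[t % K] xs := by
    conv_lhs => rw [(Nat.mod_add_div t K).symm]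
    rw [Function.iterate_add_apply, hper]
  rw [hmod]
  exact horb _ (Nat.mod_lt _ hK0) _ hxmem

/-- Every point of a finite type is eventually periodic under any self-map. -/
lemma evp {m : ℕ} (τ : Fin m → Fin m) (j : Fin m) :
    ∃ i s : ℕ, 1 ≤ s ∧ τ^[s] (τ^[i] j) = τ^[i] j := by
  obtain ⟨i₁, i₂, hne, heq⟩ :=
    Fintype.exists_ne_map_eq_of_card_lt (fun i : Fin (m + 1) => τ^[(i : ℕ)] j)
      (by simp)
  have hne' : (i₁ : ℕ) ≠ (i₂ : ℕ) := fun h => hne (Fin.ext h)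
  rcases lt_or_gt_of_ne hne' with h | h
  · refine ⟨i₁, (i₂ : ℕ) - i₁, by omega, ?_⟩
    calc τ^[(i₂ : ℕ) - i₁] (τ^[(i₁ : ℕ)] j)
        = τ^[((i₂ : ℕ) - i₁) + i₁] j := (Function.iterate_add_apply τ _ _ j).symm
      _ = τ^[(i₂ : ℕ)] j := by rw [show ((i₂ : ℕ) - i₁) + (i₁:ℕ) = i₂ by omega]
      _ = τ^[(i₁ : ℕ)] j := heq.symm
  · refine ⟨i₂, (i₁ : ℕ) - i₂, by omega, ?_⟩
    calc τ^[(i₁ : ℕ) - i₂] (τ^[(i₂ : ℕ)] j)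
        = τ^[((i₁ : ℕ) - i₂) + i₂] j := (Function.iterate_add_apply τ _ _ j).symm
      _ = τ^[(i₁ : ℕ)] j := by rw [show ((i₁ : ℕ) - i₂) + (i₂:ℕ) = i₁ by omega]
      _ = τ^[(i₂ : ℕ)] j := heq

end ES

end PWExpAux

open PWExpAux

/-- **Topological properties of piecewise `C^1` expanding interval maps with finitely
many branches** (cf. [Araújo–Pacifico, Lemma 6.30]).

Let `f : Σ_j I_j → I` be piecewise `C^1` expanding with finitely many branches
`I_j = (p j, q j)`, `|f'| ≥ σ > 2` on each branch, and `I ∖ ⋃_j I_j` finite.  Then: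
(a) for each sufficiently small `δ > 0` there is `n = n(δ)` such that every nonempty
open interval `J ⊆ ⋃_j I_j` with `|J| ≥ δ` has a subinterval `Ĵ` mapped by some
`f^k`, `0 ≤ k ≤ n`, diffeomorphically onto some branch `I_j`; and
(b) `f` admits finitely many periodic orbits contained in `⋃_j I_j` such that every
nonempty open interval `J ⊆ ⋃_j I_j` has an open subinterval mapped by some iterate
of `f` diffeomorphically onto a neighborhood of one of these periodic points. -/
theorem piecewise_expanding_interval_covering_and_periodic_orbits
    (a b : ℝ) (hab : a < b)
    (m : ℕ) (hm : 1 ≤ m) (p q : Fin m → ℝ)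
    (hpq : ∀ j, p j < q j)
    (hsub : ∀ j, Ioo (p j) (q j) ⊆ Icc a b)
    (hdisj : ∀ j j', j ≠ j' → Disjoint (Ioo (p j) (q j)) (Ioo (p j') (q j')))
    (hfin : (Icc a b \ ⋃ j, Ioo (p j) (q j)).Finite)
    (f : ℝ → ℝ) (f' : ℝ → ℝ)
    (hmaps : ∀ j, MapsTo f (Ioo (p j) (q j)) (Icc a b))
    (hderiv : ∀ j, ∀ x ∈ Ioo (p j) (q j), HasDerivAt f (f' x) x)
    (hderivcont : ∀ j, ContinuousOn f' (Ioo (p j) (q j)))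
    (σ : ℝ) (hσ : 2 < σ)
    (hexp : ∀ j, ∀ x ∈ Ioo (p j) (q j), σ ≤ |f' x|) :
    -- (a)
    (∃ δ₀ > 0, ∀ δ, 0 < δ → δ ≤ δ₀ → ∃ n : ℕ,
      ∀ e₁ e₂ : ℝ, e₁ < e₂ → δ ≤ e₂ - e₁ →
        Ioo e₁ e₂ ⊆ (⋃ j, Ioo (p j) (q j)) →
        ∃ k ≤ n, ∃ e₁' e₂' : ℝ, e₁ ≤ e₁' ∧ e₁' < e₂' ∧ e₂' ≤ e₂ ∧ ∃ j,
          f^[k] '' Ioo e₁' e₂' = Ioo (p j) (q j) ∧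
          InjOn (f^[k]) (Ioo e₁' e₂') ∧
          DifferentiableOn ℝ (f^[k]) (Ioo e₁' e₂') ∧
          ∀ x ∈ Ioo e₁' e₂', deriv (f^[k]) x ≠ 0) ∧
    -- (b)
    (∃ kk : ℕ, ∃ pp : Fin kk → ℝ,
      (∀ i, (∃ T : ℕ, 1 ≤ T ∧ f^[T] (pp i) = pp i) ∧
        ∀ t : ℕ, f^[t] (pp i) ∈ ⋃ j, Ioo (p j) (q j)) ∧
      ∀ e₁ e₂ : ℝ, e₁ < e₂ → Ioo e₁ e₂ ⊆ (⋃ j, Ioo (p j) (q j)) →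
        ∃ e₁' e₂' : ℝ, e₁ ≤ e₁' ∧ e₁' < e₂' ∧ e₂' ≤ e₂ ∧ ∃ i, ∃ n : ℕ,
          f^[n] '' Ioo e₁' e₂' ∈ nhds (pp i) ∧
          InjOn (f^[n]) (Ioo e₁' e₂') ∧
          DifferentiableOn ℝ (f^[n]) (Ioo e₁' e₂') ∧
          ∀ x ∈ Ioo e₁' e₂', deriv (f^[n]) x ≠ 0) := by
  set E : PWExpAux.ES :=
    ⟨a, b, hab, m, hm, p, q, hpq, hsub, hdisj, hfin, f, f', hmaps, hderiv,
      hderivcont, σ, hσ, hexp⟩ with hE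
  have hσ2 : (1:ℝ) < σ / 2 := by linarith
  have conv : ∀ (kk : ℕ) (c d : ℝ) (j : Fin m), E.Good kk c d j →
      f^[kk] '' Ioo c d = Ioo (p j) (q j) ∧ InjOn (f^[kk]) (Ioo c d) ∧
      DifferentiableOn ℝ (f^[kk]) (Ioo c d) ∧
      ∀ x ∈ Ioo c d, deriv (f^[kk]) x ≠ 0 := by
    intro kk c d j hG
    obtain ⟨him, hinj, hdv, _⟩ := hG
    refine ⟨him, hinj, ?_, ?_⟩
    · intro x hx
      obtain ⟨dv, _, hD⟩ := hdv x hx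
      exact hD.differentiableAt.differentiableWithinAt
    · intro x hx
      obtain ⟨dv, hdv0, hD⟩ := hdv x hx
      rw [hD.deriv]
      exact hdv0
  constructor
  · -- part (a)
    refine ⟨1, one_pos, ?_⟩
    intro δ hδ0 _
    obtain ⟨n, hn⟩ := pow_unbounded_of_one_lt ((b - a) / δ) hσ2
    refine ⟨n, ?_⟩
    intro e₁ e₂ h12 hlen hsb
    have hp : (0:ℝ) < (σ / 2) ^ n := by positivity
    have hlen' : b - a < (e₂ - e₁) * (σ / 2) ^ n := by
      rw [div_lt_iff₀ hδ0] at hn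
      nlinarith
    obtain ⟨kk, hk, c, d, hc, hcd, hd, j, hG⟩ := E.main n e₁ e₂ h12 hsb hlen'
    obtain ⟨h1, h2, h3, h4⟩ := conv kk c d j hG
    exact ⟨kk, hk, c, d, hc, hcd, hd, j, h1, h2, h3, h4⟩
  · -- part (b)
    choose k c d τ hk hpc hcd hdq hGb using E.branchdata
    have hbd : ∀ j, 1 ≤ k j ∧ E.p j < c j ∧ c j < d j ∧ d j < E.q j ∧
        E.Good (k j) (c j) (d j) (τ j) :=
      fun j => ⟨hk j, hpc j, hcd j, hdq j, hGb j⟩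
    choose ι s hs hcyc using fun j => PWExpAux.ES.evp τ j
    have hpt : ∀ j, ∃ x, x ∈ Ioo (E.p (τ^[ι j] j)) (E.q (τ^[ι j] j)) ∧
        (∃ T, 1 ≤ T ∧ E.f^[T] x = x) ∧ ∀ t, E.f^[t] x ∈ E.U :=
      fun j => E.cyclept hbd (hs j) (hcyc j)
    choose pp hppmem hpper hporb using hpt
    refine ⟨m, pp, ?_, ?_⟩
    · intro i
      exact ⟨hpper i, fun t => hporb i t⟩
    · intro e₁ e₂ h12 hsb
      have h12' : (0:ℝ) < e₂ - e₁ := by linarith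
      obtain ⟨n, hn⟩ := pow_unbounded_of_one_lt ((b - a) / (e₂ - e₁)) hσ2
      have hlen' : b - a < (e₂ - e₁) * (σ / 2) ^ n := by
        rw [div_lt_iff₀ h12'] at hn
        linarith
      obtain ⟨K0, hK0, c0, d0, hc0, hcd0, hd0, j₁, hG⟩ := E.main n e₁ e₂ h12 hsb hlen'
      obtain ⟨K, c', d', hK, hc', hcd', hd', hG'⟩ :=
        E.chain hbd (ι j₁) K0 c0 d0 j₁ hcd0 hG
      obtain ⟨h1, h2, h3, h4⟩ := conv K c' d' _ hG'
      refine ⟨c', d', le_trans hc0 hc', hcd', le_trans hd' hd0, j₁, K, ?_, h2, h3, h4⟩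
      rw [h1]
      exact isOpen_Ioo.mem_nhds (hppmem j₁)
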